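/- Let (G = (V, E), S, k) be an instance of Multicut with Vertex Splitting, where S is a set of terminal pairs with S ∩ E = ∅ and k ≥ 0. Let H = (V, B, R) be the incomplete correlation graph with blue edge set B = E and red edge set R = S. Then (G, S, k) admits a sequence of at most k exclusive vertex splits separating every surviving terminal pair if and only if H can be clustered by a sequence of at most k permissive vertex splits. -/

import Mathlib

structure ICG where
  verts : Finset ℕ
  blue : Finset (Sym2 ℕ)
  red : Finset (Sym2 ℕ)
  blue_mem : ∀ e ∈ blue, ∀ x ∈ e, x ∈ verts
  red_mem : ∀ e ∈ red, ∀ x ∈ e, x ∈ verts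
  blue_nd : ∀ e ∈ blue, ¬ e.IsDiag
  red_nd : ∀ e ∈ red, ¬ e.IsDiag
  disj : Disjoint blue red

def PermSplit (G G' : ICG) : Prop :=
  ∃ v v1 v2 : ℕ, v ∈ G.verts ∧ v1 ∉ G.verts ∧ v2 ∉ G.verts ∧ v1 ≠ v2 ∧
    G'.verts = insert v1 (insert v2 (G.verts.erase v)) ∧
    (∀ u w : ℕ, u ≠ v → w ≠ v → u ≠ v1 → u ≠ v2 → w ≠ v1 → w ≠ v2 →
      ((s(u,w) ∈ G.blue ↔ s(u,w) ∈ G'.blue) ∧ (s(u,w) ∈ G.red ↔ s(u,w) ∈ G'.red))) ∧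
    (∀ u : ℕ, s(u,v) ∈ G.blue → s(u,v1) ∈ G'.blue ∨ s(u,v2) ∈ G'.blue) ∧
    (∀ u : ℕ, s(u,v) ∈ G.red → s(u,v1) ∈ G'.red ∨ s(u,v2) ∈ G'.red)

def HasErrCycle (G : ICG) : Prop :=
  ∃ (l : List ℕ) (u v : ℕ), l.Nodup ∧ l.Chain' (fun a b => s(a,b) ∈ G.blue) ∧
    l.head? = some u ∧ l.getLast? = some v ∧ s(u,v) ∈ G.red

def Splits (n : ℕ) (G G' : ICG) : Prop :=
  ∃ f : ℕ → ICG, f 0 = G ∧ f n = G' ∧ ∀ i < n, PermSplit (f i) (f (i+1))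

structure SG where
  verts : Finset ℕ
  edges : Finset (Sym2 ℕ)
  edges_mem : ∀ e ∈ edges, ∀ x ∈ e, x ∈ verts
  edges_nd : ∀ e ∈ edges, ¬ e.IsDiag

/-- One exclusive vertex split, on a state consisting of the current graph together
with the set of vertex names used so far (to guarantee freshness of new vertices). -/
def ExclStep (p q : SG × Finset ℕ) : Prop :=
  ∃ v v1 v2 : ℕ, v ∈ p.1.verts ∧ v1 ∉ p.2 ∧ v2 ∉ p.2 ∧ v1 ∉ p.1.verts ∧ v2 ∉ p.1.verts ∧
    v1 ≠ v2 ∧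
    q.2 = insert v1 (insert v2 p.2) ∧
    q.1.verts = insert v1 (insert v2 (p.1.verts.erase v)) ∧
    (∀ u w : ℕ, u ≠ v → w ≠ v → u ≠ v1 → u ≠ v2 → w ≠ v1 → w ≠ v2 →
      (s(u,w) ∈ p.1.edges ↔ s(u,w) ∈ q.1.edges)) ∧
    (∀ u : ℕ, s(u,v) ∈ p.1.edges ↔ (s(u,v1) ∈ q.1.edges ∨ s(u,v2) ∈ q.1.edges)) ∧
    (∀ u : ℕ, ¬ (s(u,v1) ∈ q.1.edges ∧ s(u,v2) ∈ q.1.edges))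

def Reach (H : SG) (x y : ℕ) : Prop :=
  Relation.ReflTransGen (fun a b => s(a,b) ∈ H.edges) x y

/-- A solution of the Multicut with Vertex Splitting instance `(H, S, k)`:
a sequence of at most `k` exclusive vertex splits after which every terminal pair
both of whose endpoints are unsplit (i.e., still present) lies in different
connected components. -/
def MCSolution (H : SG) (S : Finset (Sym2 ℕ)) (k : ℕ) : Prop :=
  ∃ (n : ℕ) (f : ℕ → SG × Finset ℕ), n ≤ k ∧ f 0 = (H, H.verts) ∧
    (∀ i < n, ExclStep (f i) (f (i+1))) ∧
    ∀ e ∈ S, ∀ x y : ℕ, e = s(x,y) →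
      x ∈ (f n).1.verts → y ∈ (f n).1.verts → ¬ Reach (f n).1 x y


open Relation

lemma chain'_rtg {r : ℕ → ℕ → Prop} :
    ∀ l : List ℕ, l.Chain' r → ∀ u v, l.head? = some u → l.getLast? = some v →
      ReflTransGen r u v := by
  intro l
  induction l with
  | nil => intro _ u v h; simp at h
  | cons a t ih =>
    intro hc u v hh hl
    have hau : a = u := by simpa using hh
    subst hau
    cases t with
    | nil =>
      have : a = v := by simpa using hl
      subst this
      exact ReflTransGen.refl
    | cons b t' =>
      have hr : r a b := (List.isChain_cons_cons.mp hc).1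
      have hc' : (b :: t').Chain' r := (List.isChain_cons_cons.mp hc).2
      have hl' : (b :: t').getLast? = some v := by
        rwa [List.getLast?_cons_cons] at hl
      exact ReflTransGen.head hr (ih hc' b v rfl hl')

lemma reach_of_err {G : ICG} (h : HasErrCycle G) :
    ∃ x y, s(x,y) ∈ G.red ∧ ReflTransGen (fun a b => s(a,b) ∈ G.blue) x y := by
  obtain ⟨l, u, v, _, hc, hh, hl, hred⟩ := h
  exact ⟨u, v, hred, chain'_rtg l hc u v hh hl⟩

lemma err_of_reach {G : ICG} {x y : ℕ} (hred : s(x,y) ∈ G.red)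
    (h : ReflTransGen (fun a b => s(a,b) ∈ G.blue) x y) : HasErrCycle G := by
  classical
  let B : SimpleGraph ℕ :=
    { Adj := fun a b => a ≠ b ∧ s(a,b) ∈ G.blue,
      symm := by
        refine ⟨fun a b hab => ?_⟩
        exact ⟨hab.1.symm, Sym2.eq_swap ▸ hab.2⟩,
      loopless := ⟨fun a ha => ha.1 rfl⟩ }
  have hR : ReflTransGen B.Adj x y := by
    refine ReflTransGen.mono ?_ _ _ h
    intro a b hab
    refine ⟨?_, hab⟩
    rintro rfl
    exact G.blue_nd _ hab (by simp [Sym2.mk_isDiag_iff])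
  have hreach : B.Reachable x y := (SimpleGraph.reachable_iff_reflTransGen x y).mpr hR
  obtain ⟨w⟩ := hreach
  let p := w.toPath
  refine ⟨p.1.support, x, y, p.2.support_nodup, ?_, ?_, ?_, hred⟩
  · exact (p.1.isChain_adj_support).imp (fun a b hab => hab.2)
  · rw [List.head?_eq_head (SimpleGraph.Walk.support_ne_nil _), p.1.head_support]
  · rw [List.getLast?_eq_getLast (SimpleGraph.Walk.support_ne_nil _), p.1.getLast_support]

lemma rtg_symm {r : ℕ → ℕ → Prop} (hr : ∀ a b : ℕ, r a b → r b a) {x y : ℕ}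
    (h : ReflTransGen r x y) : ReflTransGen r y x :=
  (@ReflTransGen.stdSymm _ r ⟨fun a b hab => hr a b hab⟩).symm _ _ h


/-- the SG resulting from splitting `v'` into `a1, a2`, distributing neighbors
according to the blue edges of `B'` via `ψ`. -/
def splitSG (P : SG) (B' : Finset (Sym2 ℕ)) (ψ : ℕ → ℕ) (v' v1 a1 a2 : ℕ) : SG where
  verts := insert a1 (insert a2 (P.verts.erase v'))
  edges := P.edges.filter (fun e => ¬ v' ∈ e) ∪
      ((P.verts.erase v').filter (fun u => s(u, v') ∈ P.edges ∧ u ≠ a1 ∧ u ≠ a2)).image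
        (fun u => s(u, if s(ψ u, v1) ∈ B' then a1 else a2))
  edges_mem := by
    intro e he x hx
    simp only [Finset.mem_union, Finset.mem_filter, Finset.mem_image] at he
    rcases he with ⟨heP, hv'e⟩ | ⟨u, hu, rfl⟩
    · have hxP := P.edges_mem e heP x hx
      have hxv : x ≠ v' := fun hxy => hv'e (hxy ▸ hx)
      simp only [Finset.mem_insert, Finset.mem_erase]
      exact Or.inr (Or.inr ⟨hxv, hxP⟩)
    · rcases Sym2.mem_iff.mp hx with rfl | rfl
      · simp only [Finset.mem_insert, Finset.mem_erase]
        exact Or.inr (Or.inr (Finset.mem_erase.mp hu.1))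
      · split_ifs <;> simp
  edges_nd := by
    intro e he
    simp only [Finset.mem_union, Finset.mem_filter, Finset.mem_image] at he
    rcases he with ⟨heP, _⟩ | ⟨u, hu, rfl⟩
    · exact P.edges_nd e heP
    · rw [Sym2.mk_isDiag_iff]
      split_ifs
      · exact hu.2.2.1
      · exact hu.2.2.2

open Classical in
noncomputable def mcStep (Gnext : ICG) (st : (SG × Finset ℕ) × (ℕ → ℕ)) (v v1 v2 : ℕ) :
    (SG × Finset ℕ) × (ℕ → ℕ) :=
  let v' := if h2 : ∃ a ∈ st.1.1.verts, st.2 a = v then h2.choose else 0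
  let a1 := st.1.2.sup id + 1
  let a2 := st.1.2.sup id + 2
  ((splitSG st.1.1 Gnext.blue st.2 v' v1 a1 a2, insert a1 (insert a2 st.1.2)),
   fun w => if w = a1 then v1 else if w = a2 then v2 else st.2 w)

open Classical in
noncomputable def mcSeq (g : ℕ → ICG) (G0 : SG) : ℕ → (SG × Finset ℕ) × (ℕ → ℕ)
  | 0 => ((G0, G0.verts), id)
  | (i+1) =>
    if h : PermSplit (g i) (g (i+1)) then
      mcStep (g (i+1)) (mcSeq g G0 i) h.choose h.choose_spec.choose
        h.choose_spec.choose_spec.choose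
    else mcSeq g G0 i

lemma mcStep_spec (Gnext : ICG) (st : (SG × Finset ℕ) × (ℕ → ℕ)) (v v1 v2 : ℕ)
    (h2 : ∃ a ∈ st.1.1.verts, st.2 a = v) :
    ∃ v' : ℕ, v' ∈ st.1.1.verts ∧ st.2 v' = v ∧
      mcStep Gnext st v v1 v2 =
        ((splitSG st.1.1 Gnext.blue st.2 v' v1 (st.1.2.sup id + 1) (st.1.2.sup id + 2),
          insert (st.1.2.sup id + 1) (insert (st.1.2.sup id + 2) st.1.2)),
         fun w => if w = st.1.2.sup id + 1 then v1
           else if w = st.1.2.sup id + 2 then v2 else st.2 w) := by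
  obtain ⟨ha, hb⟩ := h2.choose_spec
  refine ⟨h2.choose, ha, hb, ?_⟩
  simp only [mcStep]
  rw [dif_pos h2]

def StInv (g : ℕ → ICG) (G0 : SG) (i : ℕ) : Prop :=
  (∀ a ∈ (mcSeq g G0 i).1.1.verts, (mcSeq g G0 i).2 a ∈ (g i).verts) ∧
  (∀ w ∈ (g i).verts, ∃ a ∈ (mcSeq g G0 i).1.1.verts, (mcSeq g G0 i).2 a = w) ∧
  Set.InjOn (mcSeq g G0 i).2 ↑(mcSeq g G0 i).1.1.verts ∧
  (∀ a b : ℕ, s(a,b) ∈ (mcSeq g G0 i).1.1.edges →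
    s((mcSeq g G0 i).2 a, (mcSeq g G0 i).2 b) ∈ (g i).blue) ∧
  (∀ x ∈ G0.verts, x ∈ (mcSeq g G0 i).1.1.verts → (mcSeq g G0 i).2 x = x) ∧
  G0.verts ⊆ (mcSeq g G0 i).1.2 ∧
  (mcSeq g G0 i).1.1.verts ⊆ (mcSeq g G0 i).1.2 ∧
  (∀ x y : ℕ, s(x,y) ∈ (g 0).red → x ∈ G0.verts → y ∈ G0.verts →
    x ∈ (mcSeq g G0 i).1.1.verts → y ∈ (mcSeq g G0 i).1.1.verts → s(x,y) ∈ (g i).red)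

lemma mcStepInvCore (g : ℕ → ICG) (G0 : SG) (i : ℕ) (v v1 v2 : ℕ)
    (hvmem : v ∈ (g i).verts) (hnv1 : v1 ∉ (g i).verts) (hnv2 : v2 ∉ (g i).verts)
    (hv12 : v1 ≠ v2)
    (hverts' : (g (i+1)).verts = insert v1 (insert v2 ((g i).verts.erase v)))
    (hpres : ∀ u w : ℕ, u ≠ v → w ≠ v → u ≠ v1 → u ≠ v2 → w ≠ v1 → w ≠ v2 →
      ((s(u,w) ∈ (g i).blue ↔ s(u,w) ∈ (g (i+1)).blue) ∧
       (s(u,w) ∈ (g i).red ↔ s(u,w) ∈ (g (i+1)).red)))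
    (hbr : ∀ u : ℕ, s(u,v) ∈ (g i).blue → s(u,v1) ∈ (g (i+1)).blue ∨ s(u,v2) ∈ (g (i+1)).blue)
    (hseq : mcSeq g G0 (i+1) = mcStep (g (i+1)) (mcSeq g G0 i) v v1 v2)
    (hI : StInv g G0 i) :
    StInv g G0 (i+1) ∧ ExclStep (mcSeq g G0 i).1 (mcSeq g G0 (i+1)).1 := by
  obtain ⟨c1, c2, c3, c4, c5, c6, c6b, c7⟩ := hI
  set st := mcSeq g G0 i with hstdef
  set P := st.1.1 with hPdef
  set U := st.1.2 with hUdef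
  set ψ := st.2 with hpsidef
  have h2 : ∃ a ∈ st.1.1.verts, st.2 a = v := c2 v hvmem
  obtain ⟨v', hv'P, hψv', hstep⟩ := mcStep_spec (g (i+1)) st v v1 v2 h2
  have hψv'' : ψ v' = v := hψv'
  rw [hstep] at hseq
  set a1 := U.sup id + 1 with ha1def
  set a2 := U.sup id + 2 with ha2def
  have hUlt1 : ∀ x ∈ U, x < a1 := by
    intro x hx
    have := Finset.le_sup (f := id) hx
    simp only [id] at this
    omega
  have hUlt2 : ∀ x ∈ U, x < a2 := by
    intro x hx
    have := Finset.le_sup (f := id) hx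
    simp only [id] at this
    omega
  have ha1U : a1 ∉ U := fun hc => absurd (hUlt1 _ hc) (by omega)
  have ha2U : a2 ∉ U := fun hc => absurd (hUlt2 _ hc) (by omega)
  have ha12 : a1 ≠ a2 := by omega
  have hPa1 : ∀ x ∈ P.verts, x ≠ a1 := fun x hx => Nat.ne_of_lt (hUlt1 x (c6b hx))
  have hPa2 : ∀ x ∈ P.verts, x ≠ a2 := fun x hx => Nat.ne_of_lt (hUlt2 x (c6b hx))
  have ha1P : a1 ∉ P.verts := fun hc => (hPa1 _ hc) rfl
  have ha2P : a2 ∉ P.verts := fun hc => (hPa2 _ hc) rfl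
  have memPl : ∀ {a b : ℕ}, s(a,b) ∈ P.edges → a ∈ P.verts :=
    fun hab => P.edges_mem _ hab _ (Sym2.mem_mk_left _ _)
  have memPr : ∀ {a b : ℕ}, s(a,b) ∈ P.edges → b ∈ P.verts :=
    fun hab => P.edges_mem _ hab _ (Sym2.mem_mk_right _ _)
  have ndPl : ∀ {a b : ℕ}, s(a,b) ∈ P.edges → a ≠ b :=
    fun hab heq => P.edges_nd _ hab (by rw [Sym2.mk_isDiag_iff]; exact heq)
  have hψne : ∀ a ∈ P.verts, a ≠ v' → ψ a ≠ v := by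
    intro a ha hav heq
    exact hav (c3 (Finset.mem_coe.mpr ha) (Finset.mem_coe.mpr hv'P) (heq.trans hψv'.symm))
  have hψv1 : ∀ a ∈ P.verts, ψ a ≠ v1 := by
    intro a ha heq
    have := c1 a ha
    rw [heq] at this
    exact hnv1 this
  have hψv2 : ∀ a ∈ P.verts, ψ a ≠ v2 := by
    intro a ha heq
    have := c1 a ha
    rw [heq] at this
    exact hnv2 this
  have hedges : ∀ e : Sym2 ℕ, e ∈ (splitSG P (g (i+1)).blue ψ v' v1 a1 a2).edges ↔
      (e ∈ P.edges ∧ ¬ v' ∈ e) ∨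
      ∃ u, ((u ≠ v' ∧ u ∈ P.verts) ∧ s(u, v') ∈ P.edges ∧ u ≠ a1 ∧ u ≠ a2) ∧
        s(u, if s(ψ u, v1) ∈ (g (i+1)).blue then a1 else a2) = e := by
    intro e
    simp only [splitSG, Finset.mem_union, Finset.mem_filter, Finset.mem_image,
      Finset.mem_erase]
  set Q := splitSG P (g (i+1)).blue ψ v' v1 a1 a2 with hQdef
  set ψ' : ℕ → ℕ := fun w => if w = a1 then v1 else if w = a2 then v2 else ψ w with hψ'def
  have hψ'a1 : ψ' a1 = v1 := by simp [hψ'def]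
  have hψ'a2 : ψ' a2 = v2 := by
    have : a2 ≠ a1 := by omega
    simp [hψ'def, this]
  have hψ'old : ∀ x ∈ P.verts, ψ' x = ψ x := by
    intro x hx
    simp [hψ'def, hPa1 x hx, hPa2 x hx]
  have hQverts : ∀ x : ℕ, x ∈ Q.verts ↔ x = a1 ∨ x = a2 ∨ (x ≠ v' ∧ x ∈ P.verts) := by
    intro x
    simp only [hQdef, splitSG, Finset.mem_insert, Finset.mem_erase]
  have hEx : ExclStep st.1 ((Q, insert a1 (insert a2 U)), ψ').1 := by
    refine ⟨v', a1, a2, hv'P, ha1U, ha2U, ha1P, ha2P, ha12, rfl, rfl, ?_, ?_, ?_⟩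
    · -- preservation
      intro u w hu hw hu1 hu2 hw1 hw2
      constructor
      · intro hm
        refine (hedges _).mpr (Or.inl ⟨hm, ?_⟩)
        rw [Sym2.mem_iff]
        rintro (rfl | rfl)
        · exact hu rfl
        · exact hw rfl
      · intro hm
        rcases (hedges _).mp hm with ⟨hmm, _⟩ | ⟨u', ⟨⟨hu'v, hu'P⟩, hu'e, hu'a1, hu'a2⟩, hEq⟩
        · exact hmm
        · exfalso
          by_cases hc : s(ψ u', v1) ∈ (g (i+1)).blue
          · rw [if_pos hc] at hEq
            rcases Sym2.eq_iff.mp hEq with ⟨_, hcw⟩ | ⟨_, hcu⟩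
            · exact hw1 hcw.symm
            · exact hu1 hcu.symm
          · rw [if_neg hc] at hEq
            rcases Sym2.eq_iff.mp hEq with ⟨_, hcw⟩ | ⟨_, hcu⟩
            · exact hw2 hcw.symm
            · exact hu2 hcu.symm
    · -- routing
      intro u
      constructor
      · intro hm
        have huP : u ∈ P.verts := memPl hm
        have hune : u ≠ v' := ndPl hm
        by_cases hc : s(ψ u, v1) ∈ (g (i+1)).blue
        · left
          refine (hedges _).mpr (Or.inr ⟨u, ⟨⟨hune, huP⟩, hm, hPa1 u huP, hPa2 u huP⟩, ?_⟩)
          rw [if_pos hc]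
        · right
          refine (hedges _).mpr (Or.inr ⟨u, ⟨⟨hune, huP⟩, hm, hPa1 u huP, hPa2 u huP⟩, ?_⟩)
          rw [if_neg hc]
      · intro hm
        rcases hm with hm | hm
        · rcases (hedges _).mp hm with ⟨hmm, _⟩ | ⟨u', ⟨⟨hu'v, hu'P⟩, hu'e, hu'a1, hu'a2⟩, hEq⟩
          · exact absurd (memPr hmm) ha1P
          · by_cases hc : s(ψ u', v1) ∈ (g (i+1)).blue
            · rw [if_pos hc] at hEq
              rcases Sym2.eq_iff.mp hEq with ⟨h1'', _⟩ | ⟨h1'', _⟩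
              · rw [← h1'']; exact hu'e
              · exact absurd h1'' hu'a1
            · rw [if_neg hc] at hEq
              rcases Sym2.eq_iff.mp hEq with ⟨_, h2''⟩ | ⟨h1'', _⟩
              · exact absurd h2'' ha12.symm
              · exact absurd h1'' hu'a1
        · rcases (hedges _).mp hm with ⟨hmm, _⟩ | ⟨u', ⟨⟨hu'v, hu'P⟩, hu'e, hu'a1, hu'a2⟩, hEq⟩
          · exact absurd (memPr hmm) ha2P
          · by_cases hc : s(ψ u', v1) ∈ (g (i+1)).blue
            · rw [if_pos hc] at hEq
              rcases Sym2.eq_iff.mp hEq with ⟨_, h2''⟩ | ⟨h1'', _⟩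
              · exact absurd h2'' ha12
              · exact absurd h1'' hu'a2
            · rw [if_neg hc] at hEq
              rcases Sym2.eq_iff.mp hEq with ⟨h1'', _⟩ | ⟨h1'', _⟩
              · rw [← h1'']; exact hu'e
              · exact absurd h1'' hu'a2
    · -- exclusivity
      rintro u ⟨hm1, hm2⟩
      have E1 : s(ψ u, v1) ∈ (g (i+1)).blue := by
        rcases (hedges _).mp hm1 with ⟨hmm, _⟩ | ⟨u', ⟨⟨hu'v, hu'P⟩, hu'e, hu'a1, hu'a2⟩, hEq⟩
        · exact absurd (memPr hmm) ha1P
        · by_cases hc : s(ψ u', v1) ∈ (g (i+1)).blue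
          · rw [if_pos hc] at hEq
            rcases Sym2.eq_iff.mp hEq with ⟨h1'', _⟩ | ⟨h1'', _⟩
            · rw [← h1'']; exact hc
            · exact absurd h1'' hu'a1
          · rw [if_neg hc] at hEq
            rcases Sym2.eq_iff.mp hEq with ⟨_, h2''⟩ | ⟨h1'', _⟩
            · exact absurd h2'' ha12.symm
            · exact absurd h1'' hu'a1
      have E2 : ¬ s(ψ u, v1) ∈ (g (i+1)).blue := by
        rcases (hedges _).mp hm2 with ⟨hmm, _⟩ | ⟨u', ⟨⟨hu'v, hu'P⟩, hu'e, hu'a1, hu'a2⟩, hEq⟩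
        · exact absurd (memPr hmm) ha2P
        · by_cases hc : s(ψ u', v1) ∈ (g (i+1)).blue
          · rw [if_pos hc] at hEq
            rcases Sym2.eq_iff.mp hEq with ⟨_, h2''⟩ | ⟨h1'', _⟩
            · exact absurd h2'' ha12
            · exact absurd h1'' hu'a2
          · rw [if_neg hc] at hEq
            rcases Sym2.eq_iff.mp hEq with ⟨h1'', _⟩ | ⟨h1'', _⟩
            · rw [← h1'']; exact hc
            · exact absurd h1'' hu'a2
      exact E2 E1
  constructor
  · -- StInv (i+1)
    unfold StInv
    rw [hseq]
    dsimp only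
    refine ⟨?_, ?_, ?_, ?_, ?_, ?_, ?_, ?_⟩
    · intro a ha
      rw [hverts']
      rcases (hQverts a).mp ha with rfl | rfl | ⟨hav', haP⟩
      · rw [hψ'a1]; exact Finset.mem_insert_self _ _
      · rw [hψ'a2]
        exact Finset.mem_insert_of_mem (Finset.mem_insert_self _ _)
      · rw [hψ'old a haP]
        refine Finset.mem_insert_of_mem (Finset.mem_insert_of_mem ?_)
        exact Finset.mem_erase.mpr ⟨hψne a haP hav', c1 a haP⟩
    · intro w hw
      rw [hverts'] at hw
      rcases Finset.mem_insert.mp hw with rfl | hw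
      · exact ⟨a1, (hQverts a1).mpr (Or.inl rfl), hψ'a1⟩
      rcases Finset.mem_insert.mp hw with rfl | hw
      · exact ⟨a2, (hQverts a2).mpr (Or.inr (Or.inl rfl)), hψ'a2⟩
      obtain ⟨hwv, hwmem⟩ := Finset.mem_erase.mp hw
      obtain ⟨a, haP, hψa⟩ := c2 w hwmem
      have hav' : a ≠ v' := by
        intro e
        rw [e, hψv''] at hψa
        exact hwv hψa.symm
      exact ⟨a, (hQverts a).mpr (Or.inr (Or.inr ⟨hav', haP⟩)), by rw [hψ'old a haP]; exact hψa⟩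
    · intro x hx y hy hxy
      have hx' := (hQverts x).mp (Finset.mem_coe.mp hx)
      have hy' := (hQverts y).mp (Finset.mem_coe.mp hy)
      rcases hx' with rfl | rfl | ⟨hxv', hxP⟩ <;> rcases hy' with rfl | rfl | ⟨hyv', hyP⟩
      · rfl
      · rw [hψ'a1, hψ'a2] at hxy; exact absurd hxy hv12
      · rw [hψ'a1, hψ'old y hyP] at hxy
        exact absurd hxy.symm (hψv1 y hyP)
      · rw [hψ'a1, hψ'a2] at hxy; exact absurd hxy.symm hv12
      · rfl
      · rw [hψ'a2, hψ'old y hyP] at hxy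
        exact absurd hxy.symm (hψv2 y hyP)
      · rw [hψ'a1, hψ'old x hxP] at hxy
        exact absurd hxy (hψv1 x hxP)
      · rw [hψ'a2, hψ'old x hxP] at hxy
        exact absurd hxy (hψv2 x hxP)
      · rw [hψ'old x hxP, hψ'old y hyP] at hxy
        exact c3 (Finset.mem_coe.mpr hxP) (Finset.mem_coe.mpr hyP) hxy
    · intro a b hab
      rcases (hedges _).mp hab with ⟨hm, hnv⟩ | ⟨u', ⟨⟨hu'v, hu'P⟩, hu'e, hu'a1, hu'a2⟩, hEq⟩
      · have haP : a ∈ P.verts := memPl hm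
        have hbP : b ∈ P.verts := memPr hm
        have hav' : a ≠ v' := by
          intro e
          exact hnv (e ▸ Sym2.mem_mk_left a b)
        have hbv' : b ≠ v' := by
          intro e
          exact hnv (e ▸ Sym2.mem_mk_right a b)
        rw [hψ'old a haP, hψ'old b hbP]
        exact ((hpres (ψ a) (ψ b) (hψne a haP hav') (hψne b hbP hbv') (hψv1 a haP)
          (hψv2 a haP) (hψv1 b hbP) (hψv2 b hbP)).1).mp (c4 a b hm)
      · have key : s(ψ' u', ψ' (if s(ψ u', v1) ∈ (g (i+1)).blue then a1 else a2)) ∈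
            (g (i+1)).blue := by
          by_cases hc : s(ψ u', v1) ∈ (g (i+1)).blue
          · rw [if_pos hc, hψ'old u' hu'P, hψ'a1]; exact hc
          · rw [if_neg hc, hψ'old u' hu'P, hψ'a2]
            have hb' := c4 u' v' hu'e
            rw [hψv''] at hb'
            rcases hbr (ψ u') hb' with h' | h'
            · exact absurd h' hc
            · exact h'
        rcases Sym2.eq_iff.mp hEq with ⟨h1'', h2''⟩ | ⟨h1'', h2''⟩
        · rw [← h1'', ← h2'']; exact key
        · rw [← h1'', ← h2'', Sym2.eq_swap]; exact key
    · intro x hx hxQ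
      have hxa1 : x ≠ a1 := Nat.ne_of_lt (hUlt1 x (c6 hx))
      have hxa2 : x ≠ a2 := Nat.ne_of_lt (hUlt2 x (c6 hx))
      rcases (hQverts x).mp hxQ with rfl | rfl | ⟨hxv', hxP⟩
      · exact absurd rfl hxa1
      · exact absurd rfl hxa2
      · rw [hψ'old x hxP]
        exact c5 x hx hxP
    · exact c6.trans ((Finset.subset_insert _ _).trans (Finset.subset_insert _ _))
    · intro x hx
      rcases (hQverts x).mp hx with rfl | rfl | ⟨_, hxP⟩
      · exact Finset.mem_insert_self _ _
      · exact Finset.mem_insert_of_mem (Finset.mem_insert_self _ _)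
      · exact Finset.mem_insert_of_mem (Finset.mem_insert_of_mem (c6b hxP))
    · intro x y hxy0 hxG hyG hxQ hyQ
      rcases (hQverts x).mp hxQ with rfl | rfl | ⟨hxv', hxP⟩
      · exact absurd rfl (Nat.ne_of_lt (hUlt1 _ (c6 hxG)))
      · exact absurd rfl (Nat.ne_of_lt (hUlt2 _ (c6 hxG)))
      rcases (hQverts y).mp hyQ with rfl | rfl | ⟨hyv', hyP⟩
      · exact absurd rfl (Nat.ne_of_lt (hUlt1 _ (c6 hyG)))
      · exact absurd rfl (Nat.ne_of_lt (hUlt2 _ (c6 hyG)))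
      have hred := c7 x y hxy0 hxG hyG hxP hyP
      have hxv : x ≠ v := by
        have := hψne x hxP hxv'
        rwa [c5 x hxG hxP] at this
      have hyv : y ≠ v := by
        have := hψne y hyP hyv'
        rwa [c5 y hyG hyP] at this
      have hx1 : x ≠ v1 := by
        have := hψv1 x hxP
        rwa [c5 x hxG hxP] at this
      have hx2 : x ≠ v2 := by
        have := hψv2 x hxP
        rwa [c5 x hxG hxP] at this
      have hy1 : y ≠ v1 := by
        have := hψv1 y hyP
        rwa [c5 y hyG hyP] at this
      have hy2 : y ≠ v2 := by
        have := hψv2 y hyP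
        rwa [c5 y hyG hyP] at this
      exact ((hpres x y hxv hyv hx1 hx2 hy1 hy2).2).mp hred
  · rw [hseq]
    exact hEx

lemma mcStepInv (g : ℕ → ICG) (G0 : SG) (i : ℕ)
    (h : PermSplit (g i) (g (i+1))) (hI : StInv g G0 i) :
    StInv g G0 (i+1) ∧ ExclStep (mcSeq g G0 i).1 (mcSeq g G0 (i+1)).1 := by
  obtain ⟨hvmem, hnv1, hnv2, hv12, hverts', hpres, hbr, _⟩ :=
    h.choose_spec.choose_spec.choose_spec
  refine mcStepInvCore g G0 i _ _ _ hvmem hnv1 hnv2 hv12 hverts' hpres hbr ?_ hI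
  simp only [mcSeq]
  rw [dif_pos h]

lemma mcInvBase (g : ℕ → ICG) (G0 : SG) (hg0verts : (g 0).verts = G0.verts)
    (hg0blue : (g 0).blue = G0.edges) : StInv g G0 0 := by
  unfold StInv
  simp only [mcSeq]
  refine ⟨?_, ?_, ?_, ?_, ?_, ?_, ?_, ?_⟩
  · intro a ha
    rw [hg0verts]
    exact ha
  · intro w hw
    exact ⟨w, by rwa [hg0verts] at hw, rfl⟩
  · exact fun x _ y _ h => h
  · intro a b hab
    rw [hg0blue]
    exact hab
  · exact fun x _ _ => rfl
  · exact Finset.Subset.refl _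
  · exact Finset.Subset.refl _
  · exact fun x y h _ _ _ _ => h

lemma mcInvAll (g : ℕ → ICG) (G0 : SG) (n : ℕ) (hg0verts : (g 0).verts = G0.verts)
    (hg0blue : (g 0).blue = G0.edges) (hsp : ∀ i < n, PermSplit (g i) (g (i+1))) :
    ∀ i, i ≤ n → StInv g G0 i ∧
      (∀ j < i, ExclStep (mcSeq g G0 j).1 (mcSeq g G0 (j+1)).1) := by
  intro i
  induction i with
  | zero =>
    intro _
    exact ⟨mcInvBase g G0 hg0verts hg0blue, fun j hj => absurd hj (Nat.not_lt_zero j)⟩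
  | succ i ih =>
    intro hle
    obtain ⟨hInv, hchain⟩ := ih (by omega)
    obtain ⟨hInv', hstepEx⟩ := mcStepInv g G0 i (hsp i (by omega)) hInv
    refine ⟨hInv', fun j hj => ?_⟩
    by_cases h : j < i
    · exact hchain j h
    · have : j = i := by omega
      subst this
      exact hstepEx

lemma dirA (G : SG) (S : Finset (Sym2 ℕ)) (k : ℕ)
    (H : ICG) (hv : H.verts = G.verts) (hb : H.blue = G.edges) (hr : H.red = S) :
    (∃ n ≤ k, ∃ G', Splits n H G' ∧ ¬ HasErrCycle G') → MCSolution G S k := by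
  rintro ⟨n, hnk, G', ⟨g, hg0, hgn, hgsp⟩, herr⟩
  have hg0verts : (g 0).verts = G.verts := by rw [hg0, hv]
  have hg0blue : (g 0).blue = G.edges := by rw [hg0, hb]
  have hall := mcInvAll g G n hg0verts hg0blue hgsp
  refine ⟨n, fun i => (mcSeq g G i).1, hnk, rfl, fun i hi => (hall n le_rfl).2 i hi, ?_⟩
  intro e he x y hexy hxmem hymem
  obtain ⟨c1, c2, c3, c4, c5, c6, c6b, c7⟩ := (hall n le_rfl).1
  have hxG : x ∈ G.verts := by
    rw [← hv]
    exact H.red_mem e (by rw [hr]; exact he) x (by rw [hexy]; exact Sym2.mem_mk_left x y)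
  have hyG : y ∈ G.verts := by
    rw [← hv]
    exact H.red_mem e (by rw [hr]; exact he) y (by rw [hexy]; exact Sym2.mem_mk_right x y)
  have hred0 : s(x,y) ∈ (g 0).red := by
    rw [hg0, hr, ← hexy]
    exact he
  have hredn : s(x,y) ∈ (g n).red := c7 x y hred0 hxG hyG hxmem hymem
  intro hreach
  have hlift : Relation.ReflTransGen (fun a b => s(a,b) ∈ (g n).blue)
      ((mcSeq g G n).2 x) ((mcSeq g G n).2 y) :=
    Relation.ReflTransGen.lift _ (fun a b hab => c4 a b hab) _ _ hreach
  rw [c5 x hxG hxmem, c5 y hyG hymem] at hlift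
  exact herr (hgn ▸ err_of_reach hredn hlift)

namespace DirB

variable (va vb vc : ℕ → ℕ) (n : ℕ)

/-- one-step ancестor collapse at step `i`. -/
def A (i : ℕ) (w : ℕ) : ℕ := if w = vb i ∨ w = vc i then va i else w

/-- `RAux k w` = ancestor of final vertex `w` after going back `k` steps from time `n`. -/
def RAux : ℕ → ℕ → ℕ
  | 0, w => w
  | (k+1), w => A va vb vc (n - (k+1)) (RAux k w)

/-- ancestor at time `j` of time-`n` vertex `w`. -/
def Rt (j w : ℕ) : ℕ := RAux va vb vc n (n - j) w

/-- root (time-0 ancestor) of a time-`i` vertex. -/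
def rtA : ℕ → ℕ → ℕ
  | 0, w => w
  | (i+1), w => rtA i (A va vb vc i w)

/-- canonical one-step descent (take the `vb` child). -/
def D (i : ℕ) (w : ℕ) : ℕ := if w = va i then vb i else w

def LAux : ℕ → ℕ → ℕ
  | 0, w => w
  | (k+1), w => LAux k (D va vb (n - (k+1)) w)

/-- canonical final descendant of a time-`j` vertex. -/
def Lf (j w : ℕ) : ℕ := LAux va vb n (n - j) w

lemma Rt_n (w : ℕ) : Rt va vb vc n n w = w := by
  unfold Rt
  rw [Nat.sub_self]
  rfl

lemma Rt_step {j : ℕ} (hj : j < n) (w : ℕ) :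
    Rt va vb vc n j w = A va vb vc j (Rt va vb vc n (j+1) w) := by
  unfold Rt
  have h1 : n - j = (n - (j+1)) + 1 := by omega
  rw [h1]
  show A va vb vc (n - (n - (j+1) + 1)) (RAux va vb vc n (n - (j+1)) w) = _
  rw [show n - (n - (j+1) + 1) = j from by omega]

lemma Lf_n (w : ℕ) : Lf va vb n n w = w := by
  unfold Lf
  rw [Nat.sub_self]
  rfl

lemma Lf_step {j : ℕ} (hj : j < n) (w : ℕ) :
    Lf va vb n j w = Lf va vb n (j+1) (D va vb j w) := by
  unfold Lf
  have h1 : n - j = (n - (j+1)) + 1 := by omega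
  rw [h1]
  show LAux va vb n (n - (j+1)) (D va vb (n - (n - (j+1) + 1)) w) = _
  rw [show n - (n - (j+1) + 1) = j from by omega]

lemma rtA_step (i w : ℕ) : rtA va vb vc (i+1) w = rtA va vb vc i (A va vb vc i w) := rfl

lemma down_ind (P : ℕ → Prop) (hn : P n) (hstep : ∀ j, j < n → P (j+1) → P j) :
    ∀ j, j ≤ n → P j := by
  have key : ∀ k j, j + k = n → P j := by
    intro k
    induction k with
    | zero =>
      intro j hj
      have : j = n := by omega
      rwa [this]
    | succ k ih =>
      intro j hj
      exact hstep j (by omega) (ih (j+1) (by omega))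
  intro j hj
  exact key (n - j) j (by omega)

end DirB


namespace DirB

lemma sym2_repr (z : Sym2 ℕ) : ∃ x y : ℕ, z = s(x,y) := by
  induction z using Sym2.ind with
  | _ x y => exact ⟨x, y, rfl⟩

variable (va vb vc : ℕ → ℕ) (n : ℕ) (f : ℕ → SG × Finset ℕ)

lemma RtInv
    (hverts : ∀ i < n, (f (i+1)).1.verts =
      insert (vb i) (insert (vc i) (((f i).1.verts).erase (va i))))
    (hva : ∀ i < n, va i ∈ (f i).1.verts)
    (hnb : ∀ i < n, vb i ∉ (f i).1.verts) (hnc : ∀ i < n, vc i ∉ (f i).1.verts) :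
    ∀ j, j ≤ n → ∀ w ∈ (f n).1.verts,
      Rt va vb vc n j w ∈ (f j).1.verts ∧
        rtA va vb vc j (Rt va vb vc n j w) = rtA va vb vc n w := by
  refine down_ind n _ ?_ ?_
  · intro w hw
    rw [Rt_n]
    exact ⟨hw, rfl⟩
  · intro j hj ih w hw
    obtain ⟨ih1, ih2⟩ := ih w hw
    rw [Rt_step va vb vc n hj w]
    rw [hverts j hj] at ih1
    have hrt : rtA va vb vc j (A va vb vc j (Rt va vb vc n (j+1) w)) = rtA va vb vc n w := by
      rw [← rtA_step]
      exact ih2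
    refine ⟨?_, hrt⟩
    rcases Finset.mem_insert.mp ih1 with hx | hx
    · rw [hx]
      show (if vb j = vb j ∨ vb j = vc j then va j else vb j) ∈ _
      rw [if_pos (Or.inl rfl)]
      exact hva j hj
    rcases Finset.mem_insert.mp hx with hx | hx
    · rw [hx]
      show (if vc j = vb j ∨ vc j = vc j then va j else vc j) ∈ _
      rw [if_pos (Or.inr rfl)]
      exact hva j hj
    · obtain ⟨hne, hmem⟩ := Finset.mem_erase.mp hx
      have hb : Rt va vb vc n (j+1) w ≠ vb j := fun e => hnb j hj (e ▸ hmem)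
      have hc : Rt va vb vc n (j+1) w ≠ vc j := fun e => hnc j hj (e ▸ hmem)
      show (if _ ∨ _ then va j else _) ∈ _
      rw [if_neg (by push_neg; exact ⟨hb, hc⟩)]
      exact hmem

lemma LfInv
    (hverts : ∀ i < n, (f (i+1)).1.verts =
      insert (vb i) (insert (vc i) (((f i).1.verts).erase (va i))))
    (hnb : ∀ i < n, vb i ∉ (f i).1.verts) (hnc : ∀ i < n, vc i ∉ (f i).1.verts) :
    ∀ j, j ≤ n → ∀ w ∈ (f j).1.verts,
      Lf va vb n j w ∈ (f n).1.verts ∧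
        rtA va vb vc n (Lf va vb n j w) = rtA va vb vc j w := by
  refine down_ind n _ ?_ ?_
  · intro w hw
    rw [Lf_n]
    exact ⟨hw, rfl⟩
  · intro j hj ih w hw
    rw [Lf_step va vb n hj w]
    have hy : D va vb j w ∈ (f (j+1)).1.verts := by
      rw [hverts j hj]
      unfold D
      by_cases h : w = va j
      · rw [if_pos h]
        exact Finset.mem_insert_self _ _
      · rw [if_neg h]
        exact Finset.mem_insert_of_mem
          (Finset.mem_insert_of_mem (Finset.mem_erase.mpr ⟨h, hw⟩))
    obtain ⟨L1, L2⟩ := ih _ hy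
    refine ⟨L1, ?_⟩
    rw [L2, rtA_step]
    congr 1
    unfold D A
    by_cases h : w = va j
    · rw [if_pos h, if_pos (Or.inl rfl), h]
    · rw [if_neg h, if_neg]
      push_neg
      exact ⟨fun e => hnb j hj (e ▸ hw), fun e => hnc j hj (e ▸ hw)⟩

lemma LfDist
    (hverts : ∀ i < n, (f (i+1)).1.verts =
      insert (vb i) (insert (vc i) (((f i).1.verts).erase (va i))))
    (hnb : ∀ i < n, vb i ∉ (f i).1.verts) (hnc : ∀ i < n, vc i ∉ (f i).1.verts)
    (hbc : ∀ i < n, vb i ≠ vc i) :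
    ∀ j, j ≤ n → ∀ w w' : ℕ, w ∈ (f j).1.verts → w' ∈ (f j).1.verts → w ≠ w' →
      Lf va vb n j w ≠ Lf va vb n j w' := by
  refine down_ind n _ ?_ ?_
  · intro w w' _ _ hne
    rw [Lf_n, Lf_n]
    exact hne
  · intro j hj ih w w' hw hw' hne
    rw [Lf_step va vb n hj w, Lf_step va vb n hj w']
    have hmem : ∀ u : ℕ, u ∈ (f j).1.verts → D va vb j u ∈ (f (j+1)).1.verts := by
      intro u hu
      rw [hverts j hj]
      unfold D
      by_cases h : u = va j
      · rw [if_pos h]; exact Finset.mem_insert_self _ _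
      · rw [if_neg h]
        exact Finset.mem_insert_of_mem
          (Finset.mem_insert_of_mem (Finset.mem_erase.mpr ⟨h, hu⟩))
    refine ih _ _ (hmem w hw) (hmem w' hw') ?_
    unfold D
    by_cases h1 : w = va j <;> by_cases h2 : w' = va j
    · exact absurd (h1.trans h2.symm) hne
    · rw [if_pos h1, if_neg h2]
      exact fun e => hnb j hj (e ▸ hw')
    · rw [if_neg h1, if_pos h2]
      exact fun e => hnb j hj (e.symm ▸ hw)
    · rw [if_neg h1, if_neg h2]
      exact hne

lemma LfMid
    (hverts : ∀ i < n, (f (i+1)).1.verts =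
      insert (vb i) (insert (vc i) (((f i).1.verts).erase (va i)))) :
    ∀ d i, i + d ≤ n → ∀ w ∈ (f i).1.verts,
      ∃ w', w' ∈ (f (i + d)).1.verts ∧ Lf va vb n i w = Lf va vb n (i + d) w' := by
  intro d
  induction d with
  | zero =>
    intro i _ w hw
    exact ⟨w, hw, rfl⟩
  | succ d ih =>
    intro i hi w hw
    have hilt : i < n := by omega
    have hy : D va vb i w ∈ (f (i+1)).1.verts := by
      rw [hverts i hilt]
      unfold D
      by_cases h : w = va i
      · rw [if_pos h]; exact Finset.mem_insert_self _ _
      · rw [if_neg h]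
        exact Finset.mem_insert_of_mem
          (Finset.mem_insert_of_mem (Finset.mem_erase.mpr ⟨h, hw⟩))
    obtain ⟨w', hw', heq⟩ := ih (i+1) (by omega) _ hy
    have harith : i + 1 + d = i + (d + 1) := by omega
    rw [harith] at hw' heq
    exact ⟨w', hw', by rw [Lf_step va vb n hilt w]; exact heq⟩

lemma aliveInv
    (hverts : ∀ i < n, (f (i+1)).1.verts =
      insert (vb i) (insert (vc i) (((f i).1.verts).erase (va i))))
    (hnb : ∀ i < n, vb i ∉ (f i).1.verts) (hnc : ∀ i < n, vc i ∉ (f i).1.verts)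
    (x : ℕ) (hx0 : x ∈ (f 0).1.verts)
    (hne : ∀ i < n, rtA va vb vc i (va i) ≠ x) :
    ∀ j, j ≤ n → x ∈ (f j).1.verts ∧ rtA va vb vc j x = x := by
  intro j
  induction j with
  | zero => exact fun _ => ⟨hx0, rfl⟩
  | succ j ih =>
    intro hj
    obtain ⟨m1, m2⟩ := ih (by omega)
    have hjlt : j < n := by omega
    have hxva : x ≠ va j := by
      intro e
      exact hne j hjlt (by rw [← e]; exact m2)
    have hAx : A va vb vc j x = x := by
      unfold A
      rw [if_neg]
      push_neg
      exact ⟨fun e => hnb j hjlt (e ▸ m1), fun e => hnc j hjlt (e ▸ m1)⟩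
    constructor
    · rw [hverts j hjlt]
      exact Finset.mem_insert_of_mem
        (Finset.mem_insert_of_mem (Finset.mem_erase.mpr ⟨hxva, m1⟩))
    · rw [rtA_step, hAx, m2]

end DirB

namespace DirB

open Classical in
noncomputable def spF (va vb vc : ℕ → ℕ) (f : ℕ → SG × Finset ℕ) : ℕ → Sym2 ℕ → Sym2 ℕ
  | 0, b => b
  | (i+1), b =>
    if va i ∈ spF va vb vc f i b then
      (if Sym2.map (fun x => if x = va i then vb i else x) (spF va vb vc f i b)
          ∈ (f (i+1)).1.edges
       then Sym2.map (fun x => if x = va i then vb i else x) (spF va vb vc f i b)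
       else Sym2.map (fun x => if x = va i then vc i else x) (spF va vb vc f i b))
    else spF va vb vc f i b

lemma rtA_zero_map (va vb vc : ℕ → ℕ) (z : Sym2 ℕ) :
    Sym2.map (rtA va vb vc 0) z = z := by
  have : rtA va vb vc 0 = id := rfl
  rw [this, Sym2.map_id, id]

lemma spInv (va vb vc : ℕ → ℕ) (n : ℕ) (f : ℕ → SG × Finset ℕ)
    (hnb : ∀ i < n, vb i ∉ (f i).1.verts) (hnc : ∀ i < n, vc i ∉ (f i).1.verts)
    (hpres : ∀ i < n, ∀ u w : ℕ, u ≠ va i → w ≠ va i → u ≠ vb i → u ≠ vc i →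
      w ≠ vb i → w ≠ vc i → (s(u,w) ∈ (f i).1.edges ↔ s(u,w) ∈ (f (i+1)).1.edges))
    (hrout : ∀ i < n, ∀ u : ℕ, s(u, va i) ∈ (f i).1.edges ↔
      (s(u, vb i) ∈ (f (i+1)).1.edges ∨ s(u, vc i) ∈ (f (i+1)).1.edges)) :
    ∀ i, i ≤ n → ∀ b ∈ (f 0).1.edges,
      spF va vb vc f i b ∈ (f i).1.edges ∧
        Sym2.map (rtA va vb vc i) (spF va vb vc f i b) = b := by
  intro i
  induction i with
  | zero =>
    intro _ b hb
    exact ⟨hb, rtA_zero_map va vb vc b⟩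
  | succ i ih =>
    intro hi b hb
    have hilt : i < n := by omega
    obtain ⟨m1, m2⟩ := ih (by omega) b hb
    have hrtstep : ∀ u : ℕ, u ∈ (f i).1.verts →
        rtA va vb vc (i+1) u = rtA va vb vc i u := by
      intro u hu
      rw [rtA_step]
      congr 1
      unfold A
      rw [if_neg]
      push_neg
      exact ⟨fun e => hnb i hilt (e ▸ hu), fun e => hnc i hilt (e ▸ hu)⟩
    by_cases hmem : va i ∈ spF va vb vc f i b
    · obtain ⟨u, hu⟩ := Sym2.mem_iff_exists.mp hmem
      have hune : u ≠ va i := by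
        intro h
        exact (f i).1.edges_nd _ m1 (by rw [hu, h]; exact Sym2.mk_isDiag_iff.mpr rfl)
      have huv : u ∈ (f i).1.verts :=
        (f i).1.edges_mem _ m1 u (by rw [hu]; exact Sym2.mem_mk_right _ _)
      have hmapb : Sym2.map (fun x => if x = va i then vb i else x)
          (spF va vb vc f i b) = s(vb i, u) := by
        rw [hu, Sym2.map_pair_eq, if_pos rfl, if_neg hune]
      have hmapc : Sym2.map (fun x => if x = va i then vc i else x)
          (spF va vb vc f i b) = s(vc i, u) := by
        rw [hu, Sym2.map_pair_eq, if_pos rfl, if_neg hune]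
      have hedgemem : s(u, va i) ∈ (f i).1.edges := by
        rw [Sym2.eq_swap, ← hu]
        exact m1
      have hor := (hrout i hilt u).mp hedgemem
      have hrtva : rtA va vb vc (i+1) (vb i) = rtA va vb vc i (va i) := by
        rw [rtA_step]
        congr 1
        unfold A
        rw [if_pos (Or.inl rfl)]
      have hrtvc : rtA va vb vc (i+1) (vc i) = rtA va vb vc i (va i) := by
        rw [rtA_step]
        congr 1
        unfold A
        rw [if_pos (Or.inr rfl)]
      have hb' : Sym2.map (rtA va vb vc i) (s(va i, u)) = b := by
        rw [← hu]; exact m2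
      rw [Sym2.map_pair_eq] at hb'
      by_cases hc : Sym2.map (fun x => if x = va i then vb i else x)
          (spF va vb vc f i b) ∈ (f (i+1)).1.edges
      · have hsp : spF va vb vc f (i+1) b = s(vb i, u) := by
          rw [spF, if_pos hmem, if_pos hc, hmapb]
        rw [hsp]
        constructor
        · rw [← hmapb]; exact hc
        · rw [Sym2.map_pair_eq, hrtva, hrtstep u huv, hb']
      · have hcu : s(u, vc i) ∈ (f (i+1)).1.edges := by
          rcases hor with h' | h'
          · exfalso
            apply hc
            rw [hmapb, Sym2.eq_swap]
            exact h'
          · exact h'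
        have hsp : spF va vb vc f (i+1) b = s(vc i, u) := by
          rw [spF, if_pos hmem, if_neg hc, hmapc]
        rw [hsp]
        constructor
        · rw [Sym2.eq_swap]; exact hcu
        · rw [Sym2.map_pair_eq, hrtvc, hrtstep u huv, hb']
    · obtain ⟨x, y, hxy⟩ := sym2_repr (spF va vb vc f i b)
      have hsp : spF va vb vc f (i+1) b = spF va vb vc f i b := by
        rw [spF, if_neg hmem]
      have hxva : x ≠ va i := by
        intro e
        exact hmem (by rw [hxy, e]; exact Sym2.mem_mk_left _ _)
      have hyva : y ≠ va i := by
        intro e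
        exact hmem (by rw [hxy, e]; exact Sym2.mem_mk_right _ _)
      have hxv : x ∈ (f i).1.verts :=
        (f i).1.edges_mem _ m1 x (by rw [hxy]; exact Sym2.mem_mk_left _ _)
      have hyv : y ∈ (f i).1.verts :=
        (f i).1.edges_mem _ m1 y (by rw [hxy]; exact Sym2.mem_mk_right _ _)
      rw [hsp]
      constructor
      · rw [hxy]
        refine (hpres i hilt x y hxva hyva ?_ ?_ ?_ ?_).mp (by rw [← hxy]; exact m1)
        · exact fun e => hnb i hilt (e ▸ hxv)
        · exact fun e => hnc i hilt (e ▸ hxv)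
        · exact fun e => hnb i hilt (e ▸ hyv)
        · exact fun e => hnc i hilt (e ▸ hyv)
      · rw [hxy, Sym2.map_pair_eq, hrtstep x hxv, hrtstep y hyv, ← Sym2.map_pair_eq, ← hxy, m2]

end DirB

lemma ICG_ext {A B : ICG} (h1 : A.verts = B.verts) (h2 : A.blue = B.blue)
    (h3 : A.red = B.red) : A = B := by
  cases A; cases B
  dsimp at h1 h2 h3
  subst h1; subst h2; subst h3
  rfl

namespace DirB

def mkICG (f : ℕ → SG × Finset ℕ) (n : ℕ) (E S' : Finset (Sym2 ℕ)) (R : ℕ → ℕ → ℕ)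
    (Pb Qb Pr Qr : Sym2 ℕ → ℕ)
    (hblue : ∀ j ≤ n, ∀ b ∈ E, R j (Pb b) ∈ (f j).1.verts ∧ R j (Qb b) ∈ (f j).1.verts ∧
      R j (Pb b) ≠ R j (Qb b))
    (hred : ∀ j ≤ n, ∀ e ∈ S', R j (Pr e) ∈ (f j).1.verts ∧ R j (Qr e) ∈ (f j).1.verts ∧
      R j (Pr e) ≠ R j (Qr e))
    (hdisj : ∀ j ≤ n, ∀ b ∈ E, ∀ e ∈ S',
      s(R j (Pb b), R j (Qb b)) ≠ s(R j (Pr e), R j (Qr e)))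
    (j : ℕ) : ICG where
  verts := (f (min j n)).1.verts
  blue := E.image (fun b => s(R (min j n) (Pb b), R (min j n) (Qb b)))
  red := S'.image (fun e => s(R (min j n) (Pr e), R (min j n) (Qr e)))
  blue_mem := by
    intro e he x hx
    obtain ⟨b, hbE, rfl⟩ := Finset.mem_image.mp he
    obtain ⟨m1, m2, _⟩ := hblue (min j n) (Nat.min_le_right j n) b hbE
    rcases Sym2.mem_iff.mp hx with rfl | rfl
    · exact m1
    · exact m2
  red_mem := by
    intro e he x hx
    obtain ⟨r, hrS, rfl⟩ := Finset.mem_image.mp he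
    obtain ⟨m1, m2, _⟩ := hred (min j n) (Nat.min_le_right j n) r hrS
    rcases Sym2.mem_iff.mp hx with rfl | rfl
    · exact m1
    · exact m2
  blue_nd := by
    intro e he
    obtain ⟨b, hbE, rfl⟩ := Finset.mem_image.mp he
    obtain ⟨_, _, m3⟩ := hblue (min j n) (Nat.min_le_right j n) b hbE
    rw [Sym2.mk_isDiag_iff]
    exact m3
  red_nd := by
    intro e he
    obtain ⟨r, hrS, rfl⟩ := Finset.mem_image.mp he
    obtain ⟨_, _, m3⟩ := hred (min j n) (Nat.min_le_right j n) r hrS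
    rw [Sym2.mk_isDiag_iff]
    exact m3
  disj := by
    rw [Finset.disjoint_left]
    intro a hab har
    obtain ⟨b, hbE, hb⟩ := Finset.mem_image.mp hab
    obtain ⟨r, hrS, hrr⟩ := Finset.mem_image.mp har
    exact hdisj (min j n) (Nat.min_le_right j n) b hbE r hrS (hb.trans hrr.symm)

lemma mkICG_verts (f : ℕ → SG × Finset ℕ) (n : ℕ) (E S' : Finset (Sym2 ℕ))
    (R : ℕ → ℕ → ℕ) (Pb Qb Pr Qr : Sym2 ℕ → ℕ) (hblue) (hred) (hdisj) {j : ℕ}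
    (hj : j ≤ n) :
    (mkICG f n E S' R Pb Qb Pr Qr hblue hred hdisj j).verts = (f j).1.verts := by
  simp only [mkICG, Nat.min_eq_left hj]

lemma mkICG_blue (f : ℕ → SG × Finset ℕ) (n : ℕ) (E S' : Finset (Sym2 ℕ))
    (R : ℕ → ℕ → ℕ) (Pb Qb Pr Qr : Sym2 ℕ → ℕ) (hblue) (hred) (hdisj) {j : ℕ}
    (hj : j ≤ n) :
    (mkICG f n E S' R Pb Qb Pr Qr hblue hred hdisj j).blue =
      E.image (fun b => s(R j (Pb b), R j (Qb b))) := by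
  simp only [mkICG, Nat.min_eq_left hj]

lemma mkICG_red (f : ℕ → SG × Finset ℕ) (n : ℕ) (E S' : Finset (Sym2 ℕ))
    (R : ℕ → ℕ → ℕ) (Pb Qb Pr Qr : Sym2 ℕ → ℕ) (hblue) (hred) (hdisj) {j : ℕ}
    (hj : j ≤ n) :
    (mkICG f n E S' R Pb Qb Pr Qr hblue hred hdisj j).red =
      S'.image (fun e => s(R j (Pr e), R j (Qr e))) := by
  simp only [mkICG, Nat.min_eq_left hj]

end DirB

open DirB in
lemma dirB (G : SG) (S : Finset (Sym2 ℕ)) (k : ℕ) (hS : Disjoint S G.edges)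
    (H : ICG) (hv : H.verts = G.verts) (hb : H.blue = G.edges) (hr : H.red = S) :
    MCSolution G S k → (∃ n ≤ k, ∃ G', Splits n H G' ∧ ¬ HasErrCycle G') := by
  classical
  rintro ⟨n, f, hnk, hf0, hsteps, hfin⟩
  have hsteps' : ∀ i, ∃ v v1 v2 : ℕ, i < n →
      (v ∈ (f i).1.verts ∧ v1 ∉ (f i).2 ∧ v2 ∉ (f i).2 ∧ v1 ∉ (f i).1.verts ∧
        v2 ∉ (f i).1.verts ∧ v1 ≠ v2 ∧
        (f (i+1)).2 = insert v1 (insert v2 (f i).2) ∧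
        (f (i+1)).1.verts = insert v1 (insert v2 ((f i).1.verts.erase v)) ∧
        (∀ u w : ℕ, u ≠ v → w ≠ v → u ≠ v1 → u ≠ v2 → w ≠ v1 → w ≠ v2 →
          (s(u,w) ∈ (f i).1.edges ↔ s(u,w) ∈ (f (i+1)).1.edges)) ∧
        (∀ u : ℕ, s(u,v) ∈ (f i).1.edges ↔
          (s(u,v1) ∈ (f (i+1)).1.edges ∨ s(u,v2) ∈ (f (i+1)).1.edges)) ∧
        (∀ u : ℕ, ¬ (s(u,v1) ∈ (f (i+1)).1.edges ∧ s(u,v2) ∈ (f (i+1)).1.edges))) := by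
    intro i
    by_cases h : i < n
    · obtain ⟨v, v1, v2, hrest⟩ := hsteps i h
      exact ⟨v, v1, v2, fun _ => hrest⟩
    · exact ⟨0, 0, 0, fun hc => absurd hc h⟩
  choose va vb vc hD using hsteps'
  have hva : ∀ i < n, va i ∈ (f i).1.verts := fun i h => (hD i h).1
  have hnb : ∀ i < n, vb i ∉ (f i).1.verts := fun i h => (hD i h).2.2.2.1
  have hnc : ∀ i < n, vc i ∉ (f i).1.verts := fun i h => (hD i h).2.2.2.2.1
  have hbc : ∀ i < n, vb i ≠ vc i := fun i h => (hD i h).2.2.2.2.2.1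
  have hverts : ∀ i < n, (f (i+1)).1.verts =
      insert (vb i) (insert (vc i) (((f i).1.verts).erase (va i))) :=
    fun i h => (hD i h).2.2.2.2.2.2.2.1
  have hpres : ∀ i < n, ∀ u w : ℕ, u ≠ va i → w ≠ va i → u ≠ vb i → u ≠ vc i →
      w ≠ vb i → w ≠ vc i → (s(u,w) ∈ (f i).1.edges ↔ s(u,w) ∈ (f (i+1)).1.edges) :=
    fun i h => (hD i h).2.2.2.2.2.2.2.2.1
  have hrout : ∀ i < n, ∀ u : ℕ, s(u, va i) ∈ (f i).1.edges ↔
      (s(u, vb i) ∈ (f (i+1)).1.edges ∨ s(u, vc i) ∈ (f (i+1)).1.edges) :=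
    fun i h => (hD i h).2.2.2.2.2.2.2.2.2.1
  have hV0 : (f 0).1.verts = G.verts := by rw [hf0]
  have hE0 : (f 0).1.edges = G.edges := by rw [hf0]
  -- machinery
  have hRt := RtInv va vb vc n f hverts hva hnb hnc
  have hLf := LfInv va vb vc n f hverts hnb hnc
  have hLfD := LfDist va vb vc n f hverts hnb hnc hbc
  have hAlive := aliveInv va vb vc n f hverts hnb hnc
  have hSp := spInv va vb vc n f hnb hnc hpres hrout
  set rt : ℕ → ℕ → ℕ := rtA va vb vc with hrtdef
  set R : ℕ → ℕ → ℕ := Rt va vb vc n with hRdef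
  set L : ℕ → ℕ → ℕ := Lf va vb n with hLdef
  set ReachF : ℕ → ℕ → Prop := Reach (f n).1 with hRFdef
  have hRFsymm : ∀ x y, ReachF x y → ReachF y x := by
    intro x y hxy
    exact rtg_symm (fun a b hab => by rwa [Sym2.eq_swap] at hab) hxy
  have hRFtrans : ∀ {x y z}, ReachF x y → ReachF y z → ReachF x z :=
    fun h1 h2 => Relation.ReflTransGen.trans h1 h2
  set Good : Sym2 ℕ → Prop := fun e => ∃ p q : ℕ, p ∈ (f n).1.verts ∧ q ∈ (f n).1.verts ∧
    s(rt n p, rt n q) = e ∧ ¬ ReachF p q with hGooddef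
  -- endpoints of terminal pairs
  have hSrep : ∀ e, ∃ x y : ℕ, e ∈ S → (e = s(x,y) ∧ x ∈ G.verts ∧ y ∈ G.verts) := by
    intro e
    obtain ⟨x, y, hxy⟩ := sym2_repr e
    refine ⟨x, y, fun he => ⟨hxy, ?_, ?_⟩⟩
    · rw [← hv]
      exact H.red_mem e (by rw [hr]; exact he) x (by rw [hxy]; exact Sym2.mem_mk_left _ _)
    · rw [← hv]
      exact H.red_mem e (by rw [hr]; exact he) y (by rw [hxy]; exact Sym2.mem_mk_right _ _)
  choose X Y hXY using hSrep
  set QS : ℕ → Prop := fun r => ∃ j, j < n ∧ rt j (va j) = r with hQSdef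
  have hBadSplit : ∀ e ∈ S, ¬ Good e → (QS (X e) ∨ QS (Y e)) := by
    intro e he hbad
    by_contra hno
    push_neg at hno
    obtain ⟨hno1, hno2⟩ := hno
    simp only [hQSdef, not_exists, not_and] at hno1 hno2
    obtain ⟨hexy, hxG, hyG⟩ := hXY e he
    obtain ⟨hxn, hrtx⟩ := hAlive (X e) (by rw [hV0]; exact hxG)
      (fun j hj => hno1 j hj) n le_rfl
    obtain ⟨hyn, hrty⟩ := hAlive (Y e) (by rw [hV0]; exact hyG)
      (fun j hj => hno2 j hj) n le_rfl
    exact hbad ⟨X e, Y e, hxn, hyn, by rw [hrtx, hrty, ← hexy],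
      hfin e he (X e) (Y e) hexy hxn hyn⟩
  have hrt0 : ∀ x : ℕ, rt 0 x = x := fun x => rfl
  have hBadComp : ∀ e ∈ S, ¬ Good e → ∀ p p' : ℕ, p ∈ (f n).1.verts → p' ∈ (f n).1.verts →
      rt n p = rt n p' → (rt n p = X e ∨ rt n p = Y e) → ReachF p p' := by
    intro e he hbad p p' hp hp' hroots hend
    simp only [hGooddef, not_exists, not_and, not_not] at hbad
    obtain ⟨hexy, hxG, hyG⟩ := hXY e he
    rcases hend with hend | hend
    · obtain ⟨hqn, hqroot⟩ := hLf 0 (Nat.zero_le n) (Y e) (by rw [hV0]; exact hyG)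
      have h1 : ReachF p (L 0 (Y e)) := hbad p (L 0 (Y e)) hp hqn
        (by rw [hend, hqroot, hrt0, ← hexy])
      have h2 : ReachF p' (L 0 (Y e)) := hbad p' (L 0 (Y e)) hp' hqn
        (by rw [← hroots, hend, hqroot, hrt0, ← hexy])
      exact hRFtrans h1 (hRFsymm _ _ h2)
    · obtain ⟨hqn, hqroot⟩ := hLf 0 (Nat.zero_le n) (X e) (by rw [hV0]; exact hxG)
      have h1 : ReachF p (L 0 (X e)) := hbad p (L 0 (X e)) hp hqn
        (by rw [hend, hqroot, hrt0, Sym2.eq_swap, ← hexy])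
      have h2 : ReachF p' (L 0 (X e)) := hbad p' (L 0 (X e)) hp' hqn
        (by rw [← hroots, hend, hqroot, hrt0, Sym2.eq_swap, ← hexy])
      exact hRFtrans h1 (hRFsymm _ _ h2)
    -- parking data
  have hAb : ∀ i, A va vb vc i (vb i) = va i := by
    intro i
    unfold A
    rw [if_pos (Or.inl rfl)]
  have hAc : ∀ i, A va vb vc i (vc i) = va i := by
    intro i
    unfold A
    rw [if_pos (Or.inr rfl)]
  have hrtstep' : ∀ i w, rt (i+1) w = rt i (A va vb vc i w) := fun i w => rfl
  have hQSdata : ∀ r, ∃ j, QS r → (j < n ∧ rt j (va j) = r) := by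
    intro r
    by_cases h : QS r
    · obtain ⟨j, hj1, hj2⟩ := h
      exact ⟨j, fun _ => ⟨hj1, hj2⟩⟩
    · exact ⟨0, fun hc => absurd hc h⟩
  choose pstep hpstep using hQSdata
  set parkL : ℕ → ℕ := fun r => L (pstep r + 1) (vc (pstep r)) with hparkdef
  set repL : ℕ → ℕ := fun r => L (pstep r + 1) (vb (pstep r)) with hrepdef
  have hparkFacts : ∀ r, QS r → parkL r ∈ (f n).1.verts ∧ rt n (parkL r) = r ∧
      repL r ∈ (f n).1.verts ∧ rt n (repL r) = r ∧ parkL r ≠ repL r := by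
    intro r hq
    obtain ⟨hjn, hjr⟩ := hpstep r hq
    have hvcm : vc (pstep r) ∈ (f (pstep r + 1)).1.verts := by
      rw [hverts _ hjn]
      exact Finset.mem_insert_of_mem (Finset.mem_insert_self _ _)
    have hvbm : vb (pstep r) ∈ (f (pstep r + 1)).1.verts := by
      rw [hverts _ hjn]
      exact Finset.mem_insert_self _ _
    obtain ⟨hp1, hp2⟩ := hLf (pstep r + 1) (by omega) (vc (pstep r)) hvcm
    obtain ⟨hq1, hq2⟩ := hLf (pstep r + 1) (by omega) (vb (pstep r)) hvbm
    have hrtc : rt (pstep r + 1) (vc (pstep r)) = r := by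
      rw [hrtstep', hAc]
      exact hjr
    have hrtb : rt (pstep r + 1) (vb (pstep r)) = r := by
      rw [hrtstep', hAb]
      exact hjr
    refine ⟨hp1, by rw [hp2]; exact hrtc, hq1, by rw [hq2]; exact hrtb, ?_⟩
    exact hLfD (pstep r + 1) (by omega) _ _ hvcm hvbm (hbc _ hjn).symm
  set PkP : ℕ → Prop := fun a => ∃ r, QS r ∧ a = parkL r ∧
    ∃ e ∈ S, ¬ Good e ∧ (r = X e ∨ r = Y e) with hPkPdef
  have hPkPdata : ∀ a, ∃ r, PkP a → (QS r ∧ a = parkL r ∧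
      ∃ e ∈ S, ¬ Good e ∧ (r = X e ∨ r = Y e)) := by
    intro a
    by_cases h : PkP a
    · obtain ⟨r, hrest⟩ := h
      exact ⟨r, fun _ => hrest⟩
    · exact ⟨0, fun hc => absurd hc h⟩
  choose aroot haroot using hPkPdata
  set tgt : ℕ → ℕ := fun a => if PkP a then repL (aroot a) else a with htgtdef
  have hPkPnotRep : ∀ r, QS r → ¬ PkP (repL r) := by
    intro r hq hP
    obtain ⟨r', hq', heq, _⟩ := hP
    have h1 := hparkFacts r hq
    have h2 := hparkFacts r' hq'
    have hrr' : r = r' := by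
      rw [← h1.2.2.2.1, heq, h2.2.1]
    rw [← hrr'] at heq
    exact h1.2.2.2.2 heq.symm
  have htgt : ∀ a, a ∈ (f n).1.verts → tgt a ∈ (f n).1.verts ∧ rt n (tgt a) = rt n a ∧
      ReachF a (tgt a) ∧ ¬ PkP (tgt a) := by
    intro a ha
    by_cases h : PkP a
    · obtain ⟨hq, heq, e, heS, hbad, hre⟩ := haroot a h
      have hf := hparkFacts (aroot a) hq
      have htg : tgt a = repL (aroot a) := by
        simp only [htgtdef]
        rw [if_pos h]
      rw [htg]
      have hroota : rt n a = aroot a := by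
        conv_lhs => rw [heq]
        exact hf.2.1
      refine ⟨hf.2.2.1, ?_, ?_, hPkPnotRep _ hq⟩
      · rw [hf.2.2.2.1, hroota]
      · refine hBadComp e heS hbad a (repL (aroot a)) ha hf.2.2.1 ?_ ?_
        · rw [hroota, hf.2.2.2.1]
        · rw [hroota]
          exact hre
    · have htg : tgt a = a := by
        simp only [htgtdef]
        rw [if_neg h]
      rw [htg]
      exact ⟨ha, rfl, Relation.ReflTransGen.refl, h⟩
  -- blue targets
  choose SPx SPy hSPxy using fun b => sym2_repr (spF va vb vc f n b)
  set Pb : Sym2 ℕ → ℕ := fun b => tgt (SPx b) with hPbdef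
  set Qb : Sym2 ℕ → ℕ := fun b => tgt (SPy b) with hQbdef
  have hSPfact : ∀ b ∈ G.edges, SPx b ∈ (f n).1.verts ∧ SPy b ∈ (f n).1.verts ∧
      s(rt n (SPx b), rt n (SPy b)) = b ∧ s(SPx b, SPy b) ∈ (f n).1.edges := by
    intro b hbE
    obtain ⟨m1, m2⟩ := hSp n le_rfl b (by rw [hE0]; exact hbE)
    rw [hSPxy b] at m1 m2
    rw [Sym2.map_pair_eq] at m2
    exact ⟨(f n).1.edges_mem _ m1 _ (Sym2.mem_mk_left _ _),
      (f n).1.edges_mem _ m1 _ (Sym2.mem_mk_right _ _), m2, m1⟩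
  have hBfact : ∀ b ∈ G.edges, Pb b ∈ (f n).1.verts ∧ Qb b ∈ (f n).1.verts ∧
      s(rt n (Pb b), rt n (Qb b)) = b ∧ ReachF (Pb b) (Qb b) ∧
      ¬ PkP (Pb b) ∧ ¬ PkP (Qb b) := by
    intro b hbE
    obtain ⟨m1, m2, m3, m4⟩ := hSPfact b hbE
    have t1 := htgt (SPx b) m1
    have t2 := htgt (SPy b) m2
    refine ⟨t1.1, t2.1, ?_, ?_, t1.2.2.2, t2.2.2.2⟩
    · show s(rt n (tgt (SPx b)), rt n (tgt (SPy b))) = b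
      rw [t1.2.1, t2.2.1]
      exact m3
    · have e1 : ReachF (SPx b) (SPy b) := Relation.ReflTransGen.single m4
      exact hRFtrans (hRFsymm _ _ t1.2.2.1) (hRFtrans e1 t2.2.2.1)
  -- red targets
  have hRdata : ∀ e, ∃ p q : ℕ, e ∈ S → (p ∈ (f n).1.verts ∧ q ∈ (f n).1.verts ∧
      s(rt n p, rt n q) = e ∧ (¬ ReachF p q ∨ PkP p)) := by
    intro e
    by_cases heS : e ∈ S
    · by_cases hg : Good e
      · obtain ⟨p, q, h1, h2, h3, h4⟩ := hg
        exact ⟨p, q, fun _ => ⟨h1, h2, h3, Or.inl h4⟩⟩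
      · obtain ⟨hexy, hxG, hyG⟩ := hXY e heS
        by_cases hqx : QS (X e)
        · have hf := hparkFacts (X e) hqx
          obtain ⟨hqn, hqroot⟩ := hLf 0 (Nat.zero_le n) (Y e) (by rw [hV0]; exact hyG)
          refine ⟨parkL (X e), L 0 (Y e), fun _ => ⟨hf.1, hqn, ?_, Or.inr ?_⟩⟩
          · rw [hf.2.1, hqroot, hrt0, ← hexy]
          · exact ⟨X e, hqx, rfl, e, heS, hg, Or.inl rfl⟩
        · have hqy : QS (Y e) := (hBadSplit e heS hg).resolve_left hqx
          have hf := hparkFacts (Y e) hqy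
          obtain ⟨hqn, hqroot⟩ := hLf 0 (Nat.zero_le n) (X e) (by rw [hV0]; exact hxG)
          refine ⟨parkL (Y e), L 0 (X e), fun _ => ⟨hf.1, hqn, ?_, Or.inr ?_⟩⟩
          · rw [hf.2.1, hqroot, hrt0, Sym2.eq_swap, ← hexy]
          · exact ⟨Y e, hqy, rfl, e, heS, hg, Or.inr rfl⟩
    · exact ⟨0, 0, fun hc => absurd hc heS⟩
  choose Pr Qr hPQr using hRdata
    -- hypotheses for mkICG
  have hblueH : ∀ j ≤ n, ∀ b ∈ G.edges, R j (Pb b) ∈ (f j).1.verts ∧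
      R j (Qb b) ∈ (f j).1.verts ∧ R j (Pb b) ≠ R j (Qb b) := by
    intro j hj b hbE
    obtain ⟨m1, m2, m3, _⟩ := hBfact b hbE
    obtain ⟨r1, r2⟩ := hRt j hj _ m1
    obtain ⟨r3, r4⟩ := hRt j hj _ m2
    refine ⟨r1, r3, fun hcon => ?_⟩
    have hre : rt n (Pb b) = rt n (Qb b) := by rw [← r2, ← r4, hcon]
    apply G.edges_nd b hbE
    rw [← m3, hre]
    exact Sym2.mk_isDiag_iff.mpr rfl
  have hredH : ∀ j ≤ n, ∀ e ∈ S, R j (Pr e) ∈ (f j).1.verts ∧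
      R j (Qr e) ∈ (f j).1.verts ∧ R j (Pr e) ≠ R j (Qr e) := by
    intro j hj e heS
    obtain ⟨m1, m2, m3, _⟩ := hPQr e heS
    obtain ⟨r1, r2⟩ := hRt j hj _ m1
    obtain ⟨r3, r4⟩ := hRt j hj _ m2
    refine ⟨r1, r3, fun hcon => ?_⟩
    have hre : rt n (Pr e) = rt n (Qr e) := by rw [← r2, ← r4, hcon]
    apply H.red_nd e (by rw [hr]; exact heS)
    rw [← m3, hre]
    exact Sym2.mk_isDiag_iff.mpr rfl
  have hdisjH : ∀ j ≤ n, ∀ b ∈ G.edges, ∀ e ∈ S,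
      s(R j (Pb b), R j (Qb b)) ≠ s(R j (Pr e), R j (Qr e)) := by
    intro j hj b hbE e heS hcon
    obtain ⟨m1, m2, m3, _⟩ := hBfact b hbE
    obtain ⟨m1', m2', m3', _⟩ := hPQr e heS
    have hmap := congrArg (Sym2.map (rt j)) hcon
    rw [Sym2.map_pair_eq, Sym2.map_pair_eq, (hRt j hj _ m1).2, (hRt j hj _ m2).2,
      (hRt j hj _ m1').2, (hRt j hj _ m2').2, m3, m3'] at hmap
    exact absurd hbE (Finset.disjoint_left.mp hS (hmap ▸ heS))
  set gI := mkICG f n G.edges S R Pb Qb Pr Qr hblueH hredH hdisjH with hgIdef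
  -- PermSplit steps
  have hRR : ∀ i, i < n → ∀ p, p ∈ (f n).1.verts →
      (R (i+1) p = R i p ∧ R i p ≠ va i ∧ R i p ∈ (f i).1.verts) ∨
      (R i p = va i ∧ (R (i+1) p = vb i ∨ R (i+1) p = vc i)) := by
    intro i hi p hp
    have hstep : R i p = A va vb vc i (R (i+1) p) := Rt_step va vb vc n hi p
    have hmem := (hRt (i+1) (by omega) p hp).1
    rw [hverts i hi] at hmem
    rcases Finset.mem_insert.mp hmem with h | h
    · exact Or.inr ⟨by rw [hstep, h, hAb], Or.inl h⟩
    rcases Finset.mem_insert.mp h with h | h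
    · exact Or.inr ⟨by rw [hstep, h, hAc], Or.inr h⟩
    · obtain ⟨hne, hm⟩ := Finset.mem_erase.mp h
      have hAx : A va vb vc i (R (i+1) p) = R (i+1) p := by
        unfold A
        rw [if_neg]
        push_neg
        exact ⟨fun c => hnb i hi (c ▸ hm), fun c => hnc i hi (c ▸ hm)⟩
      exact Or.inl ⟨by rw [hstep, hAx], by rw [hstep, hAx]; exact hne,
        by rw [hstep, hAx]; exact hm⟩
  have hkey : ∀ (T : Finset (Sym2 ℕ)) (Pt Qt : Sym2 ℕ → ℕ),
      (∀ t ∈ T, Pt t ∈ (f n).1.verts ∧ Qt t ∈ (f n).1.verts) → ∀ i, i < n →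
      ((∀ u w : ℕ, u ≠ va i → w ≠ va i → u ≠ vb i → u ≠ vc i → w ≠ vb i → w ≠ vc i →
        (s(u,w) ∈ T.image (fun t => s(R i (Pt t), R i (Qt t))) ↔
         s(u,w) ∈ T.image (fun t => s(R (i+1) (Pt t), R (i+1) (Qt t))))) ∧
      (∀ u : ℕ, u ≠ va i →
        s(u, va i) ∈ T.image (fun t => s(R i (Pt t), R i (Qt t))) →
        s(u, vb i) ∈ T.image (fun t => s(R (i+1) (Pt t), R (i+1) (Qt t))) ∨
        s(u, vc i) ∈ T.image (fun t => s(R (i+1) (Pt t), R (i+1) (Qt t))))) := by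
    intro T Pt Qt hmem i hi
    constructor
    · intro u w hu hw hu1 hu2 hw1 hw2
      constructor
      · intro hm
        obtain ⟨t, ht, heq⟩ := Finset.mem_image.mp hm
        obtain ⟨hP, hQ⟩ := hmem t ht
        have cP := hRR i hi _ hP
        have cQ := hRR i hi _ hQ
        rcases cP with ⟨e1, _, _⟩ | ⟨e1, _⟩
        · rcases cQ with ⟨e2, _, _⟩ | ⟨e2, _⟩
          · exact Finset.mem_image.mpr ⟨t, ht, by rw [e1, e2]; exact heq⟩
          · exfalso
            rcases Sym2.eq_iff.mp heq with ⟨_, h2⟩ | ⟨_, h2⟩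
            · exact hw (by rw [← h2, e2])
            · exact hu (by rw [← h2, e2])
        · exfalso
          rcases Sym2.eq_iff.mp heq with ⟨h2, _⟩ | ⟨h2, _⟩
          · exact hu (by rw [← h2, e1])
          · exact hw (by rw [← h2, e1])
      · intro hm
        obtain ⟨t, ht, heq⟩ := Finset.mem_image.mp hm
        obtain ⟨hP, hQ⟩ := hmem t ht
        have cP := hRR i hi _ hP
        have cQ := hRR i hi _ hQ
        rcases cP with ⟨e1, _, _⟩ | ⟨_, e1⟩
        · rcases cQ with ⟨e2, _, _⟩ | ⟨_, e2⟩
          · exact Finset.mem_image.mpr ⟨t, ht, by rw [← e1, ← e2]; exact heq⟩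
          · exfalso
            rcases e2 with e2 | e2 <;>
              rcases Sym2.eq_iff.mp heq with ⟨_, h2⟩ | ⟨_, h2⟩
            · exact hw1 (by rw [← h2, e2])
            · exact hu1 (by rw [← h2, e2])
            · exact hw2 (by rw [← h2, e2])
            · exact hu2 (by rw [← h2, e2])
        · exfalso
          rcases e1 with e1 | e1 <;>
            rcases Sym2.eq_iff.mp heq with ⟨h2, _⟩ | ⟨h2, _⟩
          · exact hu1 (by rw [← h2, e1])
          · exact hw1 (by rw [← h2, e1])
          · exact hu2 (by rw [← h2, e1])
          · exact hw2 (by rw [← h2, e1])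
    · intro u hu hm
      obtain ⟨t, ht, heq⟩ := Finset.mem_image.mp hm
      obtain ⟨hP, hQ⟩ := hmem t ht
      have cP := hRR i hi _ hP
      have cQ := hRR i hi _ hQ
      rcases Sym2.eq_iff.mp heq with ⟨h1, h2⟩ | ⟨h1, h2⟩
      · -- R i (Pt t) = u, R i (Qt t) = va i
        rcases cQ with ⟨_, e2, _⟩ | ⟨_, e2⟩
        · exact absurd h2 e2
        rcases cP with ⟨e1, _, _⟩ | ⟨e1, _⟩
        · rcases e2 with e2 | e2
          · exact Or.inl (Finset.mem_image.mpr ⟨t, ht, by rw [e1, h1, e2]⟩)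
          · exact Or.inr (Finset.mem_image.mpr ⟨t, ht, by rw [e1, h1, e2]⟩)
        · exact absurd (h1.symm.trans e1) hu
      · -- R i (Pt t) = va i, R i (Qt t) = u
        rcases cP with ⟨_, e1, _⟩ | ⟨_, e1⟩
        · exact absurd h1 e1
        rcases cQ with ⟨e2, _, _⟩ | ⟨e2, _⟩
        · rcases e1 with e1 | e1
          · exact Or.inl (Finset.mem_image.mpr ⟨t, ht, by rw [e1, e2, h2, Sym2.eq_swap]⟩)
          · exact Or.inr (Finset.mem_image.mpr ⟨t, ht, by rw [e1, e2, h2, Sym2.eq_swap]⟩)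
        · exact absurd (h2.symm.trans e2) hu
  have hPS : ∀ i, i < n → PermSplit (gI i) (gI (i+1)) := by
    intro i hi
    have hi' : i ≤ n := by omega
    have hi1 : i + 1 ≤ n := by omega
    have hBsub : ∀ t ∈ G.edges, Pb t ∈ (f n).1.verts ∧ Qb t ∈ (f n).1.verts :=
      fun t ht => ⟨(hBfact t ht).1, (hBfact t ht).2.1⟩
    have hRsub : ∀ t ∈ S, Pr t ∈ (f n).1.verts ∧ Qr t ∈ (f n).1.verts :=
      fun t ht => ⟨(hPQr t ht).1, (hPQr t ht).2.1⟩
    obtain ⟨hkB1, hkB2⟩ := hkey G.edges Pb Qb hBsub i hi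
    obtain ⟨hkR1, hkR2⟩ := hkey S Pr Qr hRsub i hi
    refine ⟨va i, vb i, vc i, ?_, ?_, ?_, hbc i hi, ?_, ?_, ?_, ?_⟩
    · rw [hgIdef, mkICG_verts f n G.edges S R Pb Qb Pr Qr hblueH hredH hdisjH hi']
      exact hva i hi
    · rw [hgIdef, mkICG_verts f n G.edges S R Pb Qb Pr Qr hblueH hredH hdisjH hi']
      exact hnb i hi
    · rw [hgIdef, mkICG_verts f n G.edges S R Pb Qb Pr Qr hblueH hredH hdisjH hi']
      exact hnc i hi
    · rw [hgIdef, mkICG_verts f n G.edges S R Pb Qb Pr Qr hblueH hredH hdisjH hi1,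
        mkICG_verts f n G.edges S R Pb Qb Pr Qr hblueH hredH hdisjH hi']
      exact hverts i hi
    · intro u w hu hw hu1 hu2 hw1 hw2
      constructor
      · rw [hgIdef, mkICG_blue f n G.edges S R Pb Qb Pr Qr hblueH hredH hdisjH hi',
          mkICG_blue f n G.edges S R Pb Qb Pr Qr hblueH hredH hdisjH hi1]
        exact hkB1 u w hu hw hu1 hu2 hw1 hw2
      · rw [hgIdef, mkICG_red f n G.edges S R Pb Qb Pr Qr hblueH hredH hdisjH hi',
          mkICG_red f n G.edges S R Pb Qb Pr Qr hblueH hredH hdisjH hi1]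
        exact hkR1 u w hu hw hu1 hu2 hw1 hw2
    · intro u hm
      have hu : u ≠ va i := by
        intro hcon
        exact (gI i).blue_nd _ hm (by rw [hcon]; exact Sym2.mk_isDiag_iff.mpr rfl)
      rw [hgIdef, mkICG_blue f n G.edges S R Pb Qb Pr Qr hblueH hredH hdisjH hi'] at hm
      rw [hgIdef, mkICG_blue f n G.edges S R Pb Qb Pr Qr hblueH hredH hdisjH hi1]
      exact hkB2 u hu hm
    · intro u hm
      have hu : u ≠ va i := by
        intro hcon
        exact (gI i).red_nd _ hm (by rw [hcon]; exact Sym2.mk_isDiag_iff.mpr rfl)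
      rw [hgIdef, mkICG_red f n G.edges S R Pb Qb Pr Qr hblueH hredH hdisjH hi'] at hm
      rw [hgIdef, mkICG_red f n G.edges S R Pb Qb Pr Qr hblueH hredH hdisjH hi1]
      exact hkR2 u hu hm
  have hR0 : ∀ w, w ∈ (f n).1.verts → R 0 w = rt n w :=
    fun w hw => (hRt 0 (Nat.zero_le n) w hw).2
  have hg0H : gI 0 = H := by
    apply ICG_ext
    · rw [hgIdef, mkICG_verts f n G.edges S R Pb Qb Pr Qr hblueH hredH hdisjH (Nat.zero_le n),
        hV0, hv]
    · rw [hgIdef, mkICG_blue f n G.edges S R Pb Qb Pr Qr hblueH hredH hdisjH (Nat.zero_le n), hb]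
      apply Finset.ext
      intro a
      simp only [Finset.mem_image]
      constructor
      · rintro ⟨t, ht, rfl⟩
        obtain ⟨m1, m2, m3, _⟩ := hBfact t ht
        rw [hR0 _ m1, hR0 _ m2, m3]
        exact ht
      · intro ha
        obtain ⟨m1, m2, m3, _⟩ := hBfact a ha
        exact ⟨a, ha, by rw [hR0 _ m1, hR0 _ m2, m3]⟩
    · rw [hgIdef, mkICG_red f n G.edges S R Pb Qb Pr Qr hblueH hredH hdisjH (Nat.zero_le n), hr]
      apply Finset.ext
      intro a
      simp only [Finset.mem_image]
      constructor
      · rintro ⟨t, ht, rfl⟩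
        obtain ⟨m1, m2, m3, _⟩ := hPQr t ht
        rw [hR0 _ m1, hR0 _ m2, m3]
        exact ht
      · intro ha
        obtain ⟨m1, m2, m3, _⟩ := hPQr a ha
        exact ⟨a, ha, by rw [hR0 _ m1, hR0 _ m2, m3]⟩
  have hnoerr : ¬ HasErrCycle (gI n) := by
    intro hcyc
    obtain ⟨x, y, hredxy, hreach⟩ := reach_of_err hcyc
    have hRn : ∀ w : ℕ, R n w = w := fun w => Rt_n va vb vc n w
    have hredxy' := hredxy
    rw [hgIdef, mkICG_red f n G.edges S R Pb Qb Pr Qr hblueH hredH hdisjH le_rfl] at hredxy'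
    obtain ⟨e, heS, heq⟩ := Finset.mem_image.mp hredxy'
    rw [hRn, hRn] at heq
    have hbrBlue : ∀ a c : ℕ, s(a,c) ∈ (gI n).blue → ReachF a c ∧ ¬ PkP c := by
      intro a c habc
      rw [hgIdef, mkICG_blue f n G.edges S R Pb Qb Pr Qr hblueH hredH hdisjH le_rfl] at habc
      obtain ⟨t, ht, heq2⟩ := Finset.mem_image.mp habc
      rw [hRn, hRn] at heq2
      obtain ⟨_, _, _, hRF, hnp, hnq⟩ := hBfact t ht
      rcases Sym2.eq_iff.mp heq2 with ⟨h1, h2⟩ | ⟨h1, h2⟩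
      · exact ⟨by rw [← h1, ← h2]; exact hRF, by rw [← h2]; exact hnq⟩
      · exact ⟨by rw [← h1, ← h2]; exact hRFsymm _ _ hRF, by rw [← h1]; exact hnp⟩
    have hflat : ∀ a c : ℕ,
        Relation.ReflTransGen (fun u w => s(u,w) ∈ (gI n).blue) a c → ReachF a c := by
      intro a c h
      induction h with
      | refl => exact Relation.ReflTransGen.refl
      | tail h1 h2 ih => exact hRFtrans ih (hbrBlue _ _ h2).1
    have hsymmB : ∀ a c : ℕ,
        Relation.ReflTransGen (fun u w => s(u,w) ∈ (gI n).blue) a c →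
        Relation.ReflTransGen (fun u w => s(u,w) ∈ (gI n).blue) c a :=
      fun a c h => rtg_symm (fun p q hpq => by rwa [Sym2.eq_swap] at hpq) h
    have hiso : ∀ a c : ℕ, PkP c →
        Relation.ReflTransGen (fun u w => s(u,w) ∈ (gI n).blue) a c → a = c := by
      intro a c hP h
      rcases Relation.ReflTransGen.cases_tail h with h' | ⟨d, _, hd⟩
      · exact h'.symm
      · exact absurd hP (hbrBlue d c hd).2
    obtain ⟨_, _, _, hsep⟩ := hPQr e heS
    have hxny : x ≠ y := by
      intro hxy
      exact (gI n).red_nd _ hredxy (by rw [hxy]; exact Sym2.mk_isDiag_iff.mpr rfl)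
    rcases hsep with hsep | hPk
    · apply hsep
      rcases Sym2.eq_iff.mp heq with ⟨h1, h2⟩ | ⟨h1, h2⟩
      · rw [h1, h2]
        exact hflat _ _ hreach
      · rw [h1, h2]
        exact hRFsymm _ _ (hflat _ _ hreach)
    · rcases Sym2.eq_iff.mp heq with ⟨h1, h2⟩ | ⟨h1, h2⟩
      · exact hxny (hiso y x (by rw [← h1]; exact hPk) (hsymmB _ _ hreach)).symm
      · exact hxny (hiso x y (by rw [← h1]; exact hPk) hreach)
  exact ⟨n, hnk, gI n, ⟨gI, hg0H, rfl, hPS⟩, hnoerr⟩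

theorem stmt3 (G : SG) (S : Finset (Sym2 ℕ)) (k : ℕ)
    (hS : Disjoint S G.edges)
    (H : ICG) (hv : H.verts = G.verts) (hb : H.blue = G.edges) (hr : H.red = S) :
    MCSolution G S k ↔ (∃ n ≤ k, ∃ G', Splits n H G' ∧ ¬ HasErrCycle G') := by
  constructor
  · exact dirB G S k hS H hv hb hr
  · exact dirA G S k H hv hb hr
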